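/- Let n ≥ 2 and let 𝓡 = {x ∈ ℝⁿ : x₁ ≠ 0, x_n ≠ 0, and for every 2 ≤ i ≤ n−1, if x_i = 0 then x_{i−1} x_{i+1} < 0}. Then: (i) 𝓡 is open in ℝⁿ; (ii) 𝓡 is dense in ℝⁿ; and (iii) the sign-change count σ : 𝓡 → ℕ defined by σ(x) = card{i ∈ {1,…,n−1} : x_i x_{i+1} < 0} + card{i ∈ {2,…,n−1} : x_i = 0} is locally constant, hence continuous, on 𝓡. -/
import Mathlib


/-- The domain 𝓡 of the integer-valued Lyapunov function for tridiagonal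
systems: interior zero coordinates must be flanked by coordinates of opposite
sign (0-based indices: coordinates 0 and n−1 are the endpoints). -/
def tridiagR (n : ℕ) (hn : 2 ≤ n) : Set (Fin n → ℝ) :=
  {x | x ⟨0, by omega⟩ ≠ 0 ∧ x ⟨n - 1, by omega⟩ ≠ 0 ∧
    ∀ i : Fin n, ∀ _h1 : 1 ≤ i.val, ∀ _h2 : i.val + 1 < n, x i = 0 →
      x ⟨i.val - 1, by omega⟩ * x ⟨i.val + 1, by omega⟩ < 0}

/-- The sign-change count σ: the number of adjacent sign changes plus the
number of interior zero coordinates. -/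
noncomputable def signChanges (n : ℕ) (x : Fin n → ℝ) : ℕ :=
  {i : Fin n | ∃ h : i.val + 1 < n, x i * x ⟨i.val + 1, h⟩ < 0}.ncard +
    {i : Fin n | 1 ≤ i.val ∧ i.val + 1 < n ∧ x i = 0}.ncard

/- ### Auxiliary material -/

lemma sign_close {a b : ℝ} (ha : a ≠ 0) (h : |b - a| < |a|) : 0 < a * b := by
  rcases abs_lt.mp h with ⟨h1, h2⟩
  rcases ha.lt_or_gt with h3 | h3
  · rw [abs_of_neg h3] at h1 h2; nlinarith
  · rw [abs_of_pos h3] at h1 h2; nlinarith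

lemma mul_neg_trans {a a' b b' : ℝ} (h1 : 0 < a * a') (h2 : 0 < b * b')
    (h : a * b < 0) : a' * b' < 0 := by nlinarith

/-- Extension of a vector to all of ℕ by the value 1. -/
def ext' (n : ℕ) (x : Fin n → ℝ) : ℕ → ℝ := fun k => if h : k < n then x ⟨k, h⟩ else 1

lemma ext'_lt (n : ℕ) (x : Fin n → ℝ) (k : ℕ) (h : k < n) : ext' n x k = x ⟨k, h⟩ :=
  dif_pos h

lemma ext'_ge (n : ℕ) (x : Fin n → ℝ) (k : ℕ) (h : n ≤ k) : ext' n x k = 1 :=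
  dif_neg (by omega)

/-- The union of the two index sets counted by σ. -/
def Cset (n : ℕ) (z : Fin n → ℝ) : Set (Fin n) :=
  {i | (∃ h : i.val + 1 < n, z i * z ⟨i.val + 1, h⟩ < 0) ∨
    (1 ≤ i.val ∧ i.val + 1 < n ∧ z i = 0)}

lemma mem_Cset (n : ℕ) (z : Fin n → ℝ) (i : Fin n) :
    i ∈ Cset n z ↔ (i.val + 1 < n ∧ ext' n z i.val * ext' n z (i.val + 1) < 0) ∨
      (1 ≤ i.val ∧ i.val + 1 < n ∧ ext' n z i.val = 0) := by
  simp only [Cset, Set.mem_setOf_eq]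
  constructor
  · rintro (⟨h, hlt⟩ | ⟨h1, h2, h3⟩)
    · left
      refine ⟨h, ?_⟩
      rw [ext'_lt n z i.val i.isLt, ext'_lt n z (i.val + 1) h, Fin.eta]
      exact hlt
    · right
      refine ⟨h1, h2, ?_⟩
      rw [ext'_lt n z i.val i.isLt, Fin.eta]
      exact h3
  · rintro (⟨h, hlt⟩ | ⟨h1, h2, h3⟩)
    · left
      refine ⟨h, ?_⟩
      rw [ext'_lt n z i.val i.isLt, ext'_lt n z (i.val + 1) h, Fin.eta] at hlt
      exact hlt
    · right
      refine ⟨h1, h2, ?_⟩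
      rw [ext'_lt n z i.val i.isLt, Fin.eta] at h3
      exact h3

lemma sigma_eq_card (n : ℕ) (z : Fin n → ℝ) : signChanges n z = (Cset n z).ncard := by
  have hdisj : Disjoint {i : Fin n | ∃ h : i.val + 1 < n, z i * z ⟨i.val + 1, h⟩ < 0}
      {i : Fin n | 1 ≤ i.val ∧ i.val + 1 < n ∧ z i = 0} := by
    rw [Set.disjoint_left]
    rintro i ⟨h, hlt⟩ ⟨_, _, h0⟩
    rw [h0, zero_mul] at hlt
    exact lt_irrefl _ hlt
  have : Cset n z = {i : Fin n | ∃ h : i.val + 1 < n, z i * z ⟨i.val + 1, h⟩ < 0} ∪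
      {i : Fin n | 1 ≤ i.val ∧ i.val + 1 < n ∧ z i = 0} := by
    ext i; simp [Cset, Set.mem_setOf_eq]
  rw [signChanges, this, Set.ncard_union_eq hdisj]

/-- The bijection between sign-change sets: shifts an index forward when the
next coordinate is an interior zero of `x`. -/
noncomputable def theta (n : ℕ) (x : Fin n → ℝ) : Fin n → Fin n := fun i =>
  if h : i.val + 2 ≤ n ∧ ext' n x i.val ≠ 0 ∧ ext' n x (i.val + 1) = 0 then
    ⟨i.val + 1, Nat.lt_of_lt_of_le (Nat.lt_succ_self _) h.1⟩
  else i

lemma theta_pos (n : ℕ) (x : Fin n → ℝ) (i : Fin n)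
    (h : i.val + 2 ≤ n ∧ ext' n x i.val ≠ 0 ∧ ext' n x (i.val + 1) = 0) :
    theta n x i = ⟨i.val + 1, Nat.lt_of_lt_of_le (Nat.lt_succ_self _) h.1⟩ :=
  dif_pos h

lemma theta_neg (n : ℕ) (x : Fin n → ℝ) (i : Fin n)
    (h : ¬(i.val + 2 ≤ n ∧ ext' n x i.val ≠ 0 ∧ ext' n x (i.val + 1) = 0)) :
    theta n x i = i :=
  dif_neg h

lemma card_eq (n : ℕ) (hn : 2 ≤ n) (x y : Fin n → ℝ)
    (hx : x ∈ tridiagR n hn) (hy : y ∈ tridiagR n hn)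
    (key : ∀ i : Fin n, x i ≠ 0 → 0 < x i * y i) :
    (Cset n y).ncard = (Cset n x).ncard := by
  obtain ⟨hx0, hxl, hxint⟩ := hx
  obtain ⟨hy0, hyl, hyint⟩ := hy
  -- extended key
  have keyE : ∀ k, ext' n x k ≠ 0 → 0 < ext' n x k * ext' n y k := by
    intro k hk
    by_cases h : k < n
    · rw [ext'_lt n x k h] at hk ⊢
      rw [ext'_lt n y k h]
      exact key _ hk
    · rw [ext'_ge n x k (by omega), ext'_ge n y k (by omega)]; norm_num
  have kz : ∀ k, ext' n y k = 0 → ext' n x k = 0 := by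
    intro k hk
    by_contra h
    have := keyE k h
    rw [hk, mul_zero] at this
    exact lt_irrefl _ this
  -- interior-zero structure for x
  have hXzero : ∀ k, ext' n x k = 0 → 1 ≤ k ∧ k + 1 < n ∧
      ext' n x (k - 1) * ext' n x (k + 1) < 0 ∧
      ext' n x (k - 1) ≠ 0 ∧ ext' n x (k + 1) ≠ 0 := by
    intro k hk
    have hkn : k < n := by
      by_contra h
      rw [ext'_ge n x k (by omega)] at hk
      exact one_ne_zero hk
    have h0 : 1 ≤ k := by
      rcases Nat.eq_zero_or_pos k with h | h
      · subst h
        rw [ext'_lt n x 0 (by omega)] at hk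
        exact absurd hk hx0
      · exact h
    have h1 : k + 1 < n := by
      by_contra h
      have hkl : k = n - 1 := by omega
      apply hxl
      rw [← ext'_lt n x (n - 1) (by omega), ← hkl]
      exact hk
    have hprod := hxint ⟨k, hkn⟩ h0 h1 (by rw [← ext'_lt n x k hkn]; exact hk)
    have hp : ext' n x (k - 1) * ext' n x (k + 1) < 0 := by
      rw [ext'_lt n x (k - 1) (by omega), ext'_lt n x (k + 1) h1]
      exact hprod
    refine ⟨h0, h1, hp, ?_, ?_⟩
    · intro h; rw [h, zero_mul] at hp; exact lt_irrefl _ hp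
    · intro h; rw [h, mul_zero] at hp; exact lt_irrefl _ hp
  -- flipping sign statements between x and y
  have flip : ∀ a b, ext' n x a ≠ 0 → ext' n x b ≠ 0 →
      ext' n x a * ext' n x b < 0 → ext' n y a * ext' n y b < 0 := by
    intro a b ha hb h
    exact mul_neg_trans (keyE a ha) (keyE b hb) h
  have flip' : ∀ a b, ext' n x a ≠ 0 → ext' n x b ≠ 0 →
      ext' n y a * ext' n y b < 0 → ext' n x a * ext' n x b < 0 := by
    intro a b ha hb h
    exact mul_neg_trans (mul_comm (ext' n x a) (ext' n y a) ▸ keyE a ha)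
      (mul_comm (ext' n x b) (ext' n y b) ▸ keyE b hb) h
  -- the key injectivity configuration is impossible
  have keycase : ∀ i j : Fin n, i ∈ Cset n y → j ∈ Cset n y →
      ext' n x i.val ≠ 0 → ext' n x (i.val + 1) = 0 → j.val = i.val + 1 → False := by
    intro i j hi hj hxi hxi1 hji
    rw [mem_Cset] at hi hj
    -- i cannot be a zero index for y
    have hyi : ext' n y i.val * ext' n y (i.val + 1) < 0 := by
      rcases hi with ⟨_, h⟩ | ⟨_, _, h⟩
      · exact h
      · exact absurd (kz _ h) hxi
    have hyi1 : ext' n y (i.val + 1) ≠ 0 := by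
      intro h; rw [h, mul_zero] at hyi; exact lt_irrefl _ hyi
    have hyj : ext' n y (i.val + 1) * ext' n y (i.val + 2) < 0 := by
      rcases hj with ⟨_, h⟩ | ⟨_, _, h⟩
      · rw [hji] at h; exact h
      · rw [hji] at h; exact absurd h hyi1
    obtain ⟨_, _, hp, hm, hp1⟩ := hXzero (i.val + 1) hxi1
    rw [Nat.add_sub_cancel] at hp hm
    have hk1 : 0 < ext' n x i.val * ext' n y i.val := keyE _ hxi
    have hk2 : 0 < ext' n x (i.val + 1 + 1) * ext' n y (i.val + 1 + 1) := keyE _ hp1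
    have h12 : i.val + 1 + 1 = i.val + 2 := by omega
    rw [h12] at hp hk2 hp1
    rcases lt_trichotomy (ext' n y (i.val + 1)) 0 with h | h | h
    · have h1 : 0 < ext' n y i.val := by nlinarith
      have h2 : 0 < ext' n y (i.val + 2) := by nlinarith
      have h3 : 0 < ext' n x i.val := by nlinarith
      have h4 : 0 < ext' n x (i.val + 2) := by nlinarith
      nlinarith
    · exact hyi1 h
    · have h1 : ext' n y i.val < 0 := by nlinarith
      have h2 : ext' n y (i.val + 2) < 0 := by nlinarith
      have h3 : ext' n x i.val < 0 := by nlinarith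
      have h4 : ext' n x (i.val + 2) < 0 := by nlinarith
      nlinarith
  have hbij : Set.BijOn (theta n x) (Cset n y) (Cset n x) := by
    refine ⟨?_, ?_, ?_⟩
    · -- MapsTo
      intro i hi
      rw [mem_Cset] at hi
      rcases hi with ⟨h1, h2⟩ | ⟨h1, h2, h3⟩
      · have hyk : ext' n y i.val ≠ 0 := by
          intro h; rw [h, zero_mul] at h2; exact lt_irrefl _ h2
        have hyk1 : ext' n y (i.val + 1) ≠ 0 := by
          intro h; rw [h, mul_zero] at h2; exact lt_irrefl _ h2
        by_cases hx0 : ext' n x i.val = 0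
        · obtain ⟨hk1, hk2, _⟩ := hXzero i.val hx0
          rw [theta_neg n x i (fun h => h.2.1 hx0), mem_Cset]
          exact Or.inr ⟨hk1, hk2, hx0⟩
        · by_cases hx1 : ext' n x (i.val + 1) = 0
          · obtain ⟨hh1, hh2, _, _, _⟩ := hXzero (i.val + 1) hx1
            rw [theta_pos n x i ⟨by omega, hx0, hx1⟩, mem_Cset]
            right
            exact ⟨show 1 ≤ i.val + 1 from by omega, show i.val + 1 + 1 < n from by omega, hx1⟩
          · rw [theta_neg n x i (fun h => hx1 h.2.2), mem_Cset]
            exact Or.inl ⟨h1, flip' i.val (i.val + 1) hx0 hx1 h2⟩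
      · have hx0 : ext' n x i.val = 0 := kz i.val h3
        rw [theta_neg n x i (fun h => h.2.1 hx0), mem_Cset]
        exact Or.inr ⟨h1, h2, hx0⟩
    · -- InjOn
      intro i hi j hj hij
      by_cases pi : i.val + 2 ≤ n ∧ ext' n x i.val ≠ 0 ∧ ext' n x (i.val + 1) = 0
      · by_cases pj : j.val + 2 ≤ n ∧ ext' n x j.val ≠ 0 ∧ ext' n x (j.val + 1) = 0
        · rw [theta_pos n x i pi, theta_pos n x j pj] at hij
          have := congrArg Fin.val hij
          simp only at this
          exact Fin.ext (by omega)
        · rw [theta_pos n x i pi, theta_neg n x j pj] at hij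
          exact absurd (keycase i j hi hj pi.2.1 pi.2.2
            (by rw [← hij]) ) (fun h => h)
      · by_cases pj : j.val + 2 ≤ n ∧ ext' n x j.val ≠ 0 ∧ ext' n x (j.val + 1) = 0
        · rw [theta_neg n x i pi, theta_pos n x j pj] at hij
          exact absurd (keycase j i hj hi pj.2.1 pj.2.2
            (by rw [hij])) (fun h => h)
        · rw [theta_neg n x i pi, theta_neg n x j pj] at hij
          exact hij
    · -- SurjOn
      intro i hi
      rw [mem_Cset] at hi
      rcases hi with ⟨h1, h2⟩ | ⟨h1, h2, h3⟩
      · have hx0 : ext' n x i.val ≠ 0 := by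
          intro h; rw [h, zero_mul] at h2; exact lt_irrefl _ h2
        have hx1 : ext' n x (i.val + 1) ≠ 0 := by
          intro h; rw [h, mul_zero] at h2; exact lt_irrefl _ h2
        refine ⟨i, ?_, theta_neg n x i (fun h => hx1 h.2.2)⟩
        rw [mem_Cset]
        exact Or.inl ⟨h1, flip i.val (i.val + 1) hx0 hx1 h2⟩
      · obtain ⟨_, _, hp, hm, hp1⟩ := hXzero i.val h3
        have hyp : ext' n y (i.val - 1) * ext' n y (i.val + 1) < 0 :=
          flip _ _ hm hp1 hp
        by_cases hy0 : ext' n y i.val = 0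
        · refine ⟨i, ?_, theta_neg n x i (fun h => h.2.1 h3)⟩
          rw [mem_Cset]
          exact Or.inr ⟨h1, h2, hy0⟩
        · by_cases hy2 : ext' n y i.val * ext' n y (i.val + 1) < 0
          · refine ⟨i, ?_, theta_neg n x i (fun h => h.2.1 h3)⟩
            rw [mem_Cset]
            exact Or.inl ⟨h2, hy2⟩
          · have hyk1 : ext' n y (i.val + 1) ≠ 0 := by
              intro h; rw [h, mul_zero] at hyp; exact lt_irrefl _ hyp
            have hge : 0 ≤ ext' n y i.val * ext' n y (i.val + 1) := not_lt.mp hy2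
            have hneg : ext' n y (i.val - 1) * ext' n y i.val < 0 := by
              rcases hyk1.lt_or_gt with h | h
              · have ha : 0 < ext' n y (i.val - 1) := by nlinarith
                have hb : ext' n y i.val ≤ 0 := by nlinarith
                have hb' : ext' n y i.val < 0 := lt_of_le_of_ne hb hy0
                nlinarith
              · have ha : ext' n y (i.val - 1) < 0 := by nlinarith
                have hb : 0 ≤ ext' n y i.val := by nlinarith
                have hb' : 0 < ext' n y i.val := lt_of_le_of_ne hb (Ne.symm hy0)
                nlinarith
            refine ⟨⟨i.val - 1, by omega⟩, ?_, ?_⟩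
            · rw [mem_Cset]
              left
              refine ⟨show i.val - 1 + 1 < n from by omega, ?_⟩
              show ext' n y (i.val - 1) * ext' n y (i.val - 1 + 1) < 0
              rw [show i.val - 1 + 1 = i.val from by omega]
              exact hneg
            · rw [theta_pos n x ⟨i.val - 1, by omega⟩
                ⟨show i.val - 1 + 2 ≤ n from by omega, ?_, ?_⟩]
              · exact Fin.ext (show i.val - 1 + 1 = i.val from by omega)
              · show ext' n x (i.val - 1) ≠ 0
                exact hm
              · show ext' n x (i.val - 1 + 1) = 0
                rw [show i.val - 1 + 1 = i.val from by omega]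
                exact h3
  calc (Cset n y).ncard = (theta n x '' Cset n y).ncard :=
        (Set.ncard_image_of_injOn hbij.injOn).symm
    _ = (Cset n x).ncard := by rw [hbij.image_eq]

/-- 𝓡 is open and dense in ℝⁿ, and the sign-change count σ is locally
constant (hence continuous) on 𝓡. -/
theorem stmt16 (n : ℕ) (hn : 2 ≤ n) :
    IsOpen (tridiagR n hn) ∧ Dense (tridiagR n hn) ∧
    ∀ x ∈ tridiagR n hn, ∃ ε > (0:ℝ), ∀ y ∈ tridiagR n hn,
      ‖y - x‖ < ε → signChanges n y = signChanges n x := by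
  refine ⟨?_, ?_, ?_⟩
  · -- openness
    have hset : tridiagR n hn =
        ({x : Fin n → ℝ | x ⟨0, by omega⟩ ≠ 0} ∩ {x : Fin n → ℝ | x ⟨n - 1, by omega⟩ ≠ 0}) ∩
        ⋂ i : Fin n, {x : Fin n → ℝ | ∀ _h1 : 1 ≤ i.val, ∀ _h2 : i.val + 1 < n, x i = 0 →
          x ⟨i.val - 1, Nat.lt_of_le_of_lt (Nat.sub_le _ _) i.isLt⟩ * x ⟨i.val + 1, _h2⟩ < 0} := by
      ext x
      simp only [tridiagR, Set.mem_setOf_eq, Set.mem_inter_iff, Set.mem_iInter]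
      tauto
    rw [hset]
    refine IsOpen.inter (IsOpen.inter ?_ ?_) (isOpen_iInter_of_finite fun i => ?_)
    · exact isOpen_ne.preimage (continuous_apply _)
    · exact isOpen_ne.preimage (continuous_apply _)
    · by_cases hi : 1 ≤ i.val ∧ i.val + 1 < n
      · have : {x : Fin n → ℝ | ∀ _h1 : 1 ≤ i.val, ∀ _h2 : i.val + 1 < n, x i = 0 →
            x ⟨i.val - 1, Nat.lt_of_le_of_lt (Nat.sub_le _ _) i.isLt⟩ * x ⟨i.val + 1, _h2⟩ < 0} =
            {x : Fin n → ℝ | x i ≠ 0} ∪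
            {x : Fin n → ℝ | x ⟨i.val - 1, Nat.lt_of_le_of_lt (Nat.sub_le _ _) i.isLt⟩ *
              x ⟨i.val + 1, hi.2⟩ < 0} := by
          ext x
          simp only [Set.mem_setOf_eq, Set.mem_union]
          constructor
          · intro H
            by_cases hx : x i = 0
            · exact Or.inr (H hi.1 hi.2 hx)
            · exact Or.inl hx
          · rintro (hx | hp) h1 h2 h0
            · exact absurd h0 hx
            · exact hp
        rw [this]
        exact IsOpen.union (isOpen_ne.preimage (continuous_apply _))
          (isOpen_lt ((continuous_apply (⟨i.val - 1, Nat.lt_of_le_of_lt (Nat.sub_le _ _) i.isLt⟩ : Fin n)).mul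
            (continuous_apply (⟨i.val + 1, hi.2⟩ : Fin n))) continuous_const)
      · have : {x : Fin n → ℝ | ∀ _h1 : 1 ≤ i.val, ∀ _h2 : i.val + 1 < n, x i = 0 →
            x ⟨i.val - 1, Nat.lt_of_le_of_lt (Nat.sub_le _ _) i.isLt⟩ * x ⟨i.val + 1, _h2⟩ < 0} =
            Set.univ := by
          ext x
          simp only [Set.mem_setOf_eq, Set.mem_univ, iff_true]
          intro h1 h2 _
          exact absurd ⟨h1, h2⟩ hi
        rw [this]
        exact isOpen_univ
  · -- density
    rw [Metric.dense_iff]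
    intro x r hr
    set y : Fin n → ℝ := fun i => if x i = 0 then r / 2 else x i with hy
    have hall : ∀ i, y i ≠ 0 := by
      intro i
      by_cases h : x i = 0
      · simp only [hy, if_pos h]
        positivity
      · simp only [hy, if_neg h]
        exact h
    refine ⟨y, ?_, hall _, hall _, fun i h1 h2 h0 => absurd h0 (hall i)⟩
    rw [Metric.mem_ball, dist_pi_lt_iff hr]
    intro i
    by_cases h : x i = 0
    · simp only [hy, Real.dist_eq, if_pos h, h, sub_zero]
      rw [abs_of_pos (by positivity)]
      linarith
    · simp only [hy, Real.dist_eq, if_neg h, sub_self, abs_zero]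
      exact hr
  · -- local constancy
    intro x hx
    have hne : (Finset.univ : Finset (Fin n)).Nonempty := ⟨⟨0, by omega⟩, Finset.mem_univ _⟩
    set ε := Finset.univ.inf' hne (fun i => if x i = 0 then 1 else |x i|) with hε
    have hεpos : 0 < ε := by
      rw [hε, Finset.lt_inf'_iff]
      intro i _
      by_cases h : x i = 0
      · rw [if_pos h]; norm_num
      · rw [if_neg h]; exact abs_pos.mpr h
    refine ⟨ε, hεpos, ?_⟩
    intro y hy hxy
    have key : ∀ i : Fin n, x i ≠ 0 → 0 < x i * y i := by
      intro i hi
      apply sign_close hi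
      have h2 : ‖(y - x) i‖ ≤ ‖y - x‖ := norm_le_pi_norm (y - x) i
      have h3 : ε ≤ |x i| := by
        have := Finset.inf'_le (f := fun i => if x i = 0 then 1 else |x i|)
          (b := i) (Finset.mem_univ i)
        rwa [if_neg hi] at this
      simp only [Pi.sub_apply, Real.norm_eq_abs] at h2
      linarith
    rw [sigma_eq_card, sigma_eq_card]
    exact card_eq n hn x y hx hy key
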